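/- For 0 ≤ k ≤ i and 0 ≤ j ≤ i-k, Σ_{r=0}^{k} Σ_{s=0}^{r} T(k; s, k-r, r-s) · C(i-k+r, j+s) = Σ_{ℓ=0}^{k} C(k,ℓ) · Σ_{s=0}^{ℓ} C(ℓ,s) · C(i+ℓ-k, j+s). -/

import Mathlib

def trinom (n p q r : ℕ) : ℕ := n.factorial / (p.factorial * q.factorial * r.factorial)

lemma trinom_eq (k r s : ℕ) (hr : r ≤ k) (hs : s ≤ r) :
    trinom k s (k - r) (r - s) = k.choose r * r.choose s := by
  unfold trinom
  have h1 := Nat.choose_mul_factorial_mul_factorial hr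
  have h2 := Nat.choose_mul_factorial_mul_factorial hs
  have hpos : 0 < s.factorial * (k - r).factorial * (r - s).factorial :=
    Nat.mul_pos (Nat.mul_pos s.factorial_pos (k - r).factorial_pos) (r - s).factorial_pos
  refine Nat.div_eq_of_eq_mul_left hpos ?_
  calc k.factorial = k.choose r * r.factorial * (k - r).factorial := h1.symm
    _ = k.choose r * (r.choose s * s.factorial * (r - s).factorial) * (k - r).factorial := by
        rw [h2]
    _ = k.choose r * r.choose s * (s.factorial * (k - r).factorial * (r - s).factorial) := by
        ring

theorem stmt_13 (i j k : ℕ) (hk : k ≤ i) (hj : j ≤ i - k) :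
    ∑ r ∈ Finset.range (k + 1), ∑ s ∈ Finset.range (r + 1),
        trinom k s (k - r) (r - s) * (i - k + r).choose (j + s) =
      ∑ ℓ ∈ Finset.range (k + 1),
        k.choose ℓ * ∑ s ∈ Finset.range (ℓ + 1), ℓ.choose s * (i + ℓ - k).choose (j + s) := by
  refine Finset.sum_congr rfl fun r hr => ?_
  have hrk : r ≤ k := Nat.lt_succ_iff.mp (Finset.mem_range.mp hr)
  rw [Finset.mul_sum]
  refine Finset.sum_congr rfl fun s hs => ?_
  have hsr : s ≤ r := Nat.lt_succ_iff.mp (Finset.mem_range.mp hs)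
  rw [trinom_eq k r s hrk hsr, mul_assoc]
  have h : i - k + r = i + r - k := by omega
  rw [h]
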